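/- On ℝ⁶ with coordinates (x₁,…,x₆) = (γ₁,γ₂,γ₃,M₁,M₂,M₃), define the constant trivectors T₂^{abc} = (∂₁∧∂₂∧∂₃)^{abc} − a(∂₄∧∂₅∧∂₆)^{abc} and T₃^{abc} = ∑_{i,j,k=1}^{3} ε_{ijk} (∂_i ∧ ∂_{j+3} ∧ ∂_{k+3})^{abc}, where (u∧v∧w)^{abc} = u_a(v_bw_c − v_cw_b) − u_b(v_aw_c − v_cw_a) + u_c(v_aw_b − v_bw_a). Let X = (2(γ₃M₂−γ₂M₃), 2(γ₁M₃−γ₃M₁), 2(γ₂M₁−γ₁M₂), −aγ₂, aγ₁, 0) be the Lagrange vector field, f₁ = γ₁²+γ₂²+γ₃², f₂ = γ₁M₁+γ₂M₂+γ₃M₃, f₃ = M₁²+M₂²+M₃²+aγ₃, f₄ = M₃, let P₂ be the antisymmetric matrix field with upper entries (1,2) ↦ 2γ₃, (1,3) ↦ −2γ₂, (2,3) ↦ 2γ₁, (4,5) ↦ −a (others 0), and let P₃ have entries (i,j) ↦ 0 for i,j ≤ 3, (i,j+3) ↦ ∑_k ε_{ijk}γ_k, (i+3,j+3) ↦ ∑_k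 ε_{ijk}M_k. Then at every point: (a) ∑_c T₂^{abc} ∂(f₁+f₄)/∂x_c = (P₂)_{ab} and ∑_{b,c} T₂^{abc} (∂(f₁+f₄)/∂x_b)(∂f₂/∂x_c) = −X_a; (b) ∑_c T₃^{abc} ∂f₂/∂x_c = 2(P₃)_{ab} and ∑_{b,c} T₃^{abc} (∂f₂/∂x_b)(∂f₃/∂x_c) = −2X_a. -/

import Mathlib

noncomputable section

open scoped BigOperators

/-- Partial derivative of `f` in the `i`-th coordinate direction at `x`. -/
def pd {n : ℕ} (i : Fin n) (f : (Fin n → ℝ) → ℝ) (x : Fin n → ℝ) : ℝ :=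
  fderiv ℝ f x (Pi.single i 1)

/-- The Lagrange vector field on `ℝ⁶` with coordinates
`(x₁,…,x₆) = (γ₁,γ₂,γ₃,M₁,M₂,M₃)`. -/
def lagX (a : ℝ) (x : Fin 6 → ℝ) : Fin 6 → ℝ :=
  ![2 * (x 2 * x 4 - x 1 * x 5), 2 * (x 0 * x 5 - x 2 * x 3),
    2 * (x 1 * x 3 - x 0 * x 4), -(a * x 1), a * x 0, 0]

/-- `f₁ = γ₁² + γ₂² + γ₃²`. -/
def lagF₁ (x : Fin 6 → ℝ) : ℝ := x 0 ^ 2 + x 1 ^ 2 + x 2 ^ 2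

/-- `f₂ = γ₁M₁ + γ₂M₂ + γ₃M₃`. -/
def lagF₂ (x : Fin 6 → ℝ) : ℝ := x 0 * x 3 + x 1 * x 4 + x 2 * x 5

/-- `f₃ = M₁² + M₂² + M₃² + aγ₃`. -/
def lagF₃ (a : ℝ) (x : Fin 6 → ℝ) : ℝ := x 3 ^ 2 + x 4 ^ 2 + x 5 ^ 2 + a * x 2

/-- `f₄ = M₃`. -/
def lagF₄ (x : Fin 6 → ℝ) : ℝ := x 5

/-- Contraction of a matrix field with the gradient of a function:
`(P∇f)_i = ∑_j P_{ij} ∂f/∂x_j`. -/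
def Pgrad {n : ℕ} (P : (Fin n → ℝ) → Matrix (Fin n) (Fin n) ℝ)
    (f : (Fin n → ℝ) → ℝ) (x : Fin n → ℝ) (i : Fin n) : ℝ :=
  ∑ j, P x i j * pd j f x

/-- Lie derivative of a (2,0) tensor (matrix field) `P` along the vector field `X`:
`(L_X P)_{ij} = ∑_k (X_k ∂P_{ij}/∂x_k − P_{kj} ∂X_i/∂x_k − P_{ik} ∂X_j/∂x_k)`. -/
def matLie {n : ℕ} (X : (Fin n → ℝ) → Fin n → ℝ)
    (P : (Fin n → ℝ) → Matrix (Fin n) (Fin n) ℝ) (x : Fin n → ℝ) (i j : Fin n) : ℝ :=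
  ∑ k, (X x k * pd k (fun y => P y i j) x - P x k j * pd k (fun y => X y i) x
        - P x i k * pd k (fun y => X y j) x)

/-- The Jacobiator of an antisymmetric matrix field; it vanishes identically iff `P`
satisfies the Jacobi identity (i.e. is a Poisson bivector). -/
def jacobiator {n : ℕ} (P : (Fin n → ℝ) → Matrix (Fin n) (Fin n) ℝ)
    (x : Fin n → ℝ) (i j k : Fin n) : ℝ :=
  ∑ l, (P x l i * pd l (fun y => P y j k) x + P x l j * pd l (fun y => P y k i) x
        + P x l k * pd l (fun y => P y i j) x)

/-- The Levi-Civita symbol on three indices, `ε₀₁₂ = 1` (0-based). -/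
def eps (i j k : Fin 3) : ℝ :=
  (((j : ℕ) : ℝ) - ((i : ℕ) : ℝ)) * (((k : ℕ) : ℝ) - ((j : ℕ) : ℝ)) *
    (((k : ℕ) : ℝ) - ((i : ℕ) : ℝ)) / 2

/-- Components of the wedge product of three vectors:
`(u∧v∧w)^{abc} = u_a(v_bw_c − v_cw_b) − u_b(v_aw_c − v_cw_a) + u_c(v_aw_b − v_bw_a)`. -/
def wedge3 (u v w : Fin 6 → ℝ) (a b c : Fin 6) : ℝ :=
  u a * (v b * w c - v c * w b) - u b * (v a * w c - v c * w a)
    + u c * (v a * w b - v b * w a)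

/-- The `i`-th standard basis vector `∂_i` of `ℝ⁶`. -/
def e6 (i : Fin 6) : Fin 6 → ℝ := fun j => if j = i then 1 else 0

/-- Embedding of an index `i ∈ {1,2,3}` as the index of `∂_i` in `ℝ⁶`. -/
def lo (i : Fin 3) : Fin 6 := ⟨(i : ℕ), by have := i.isLt; omega⟩

/-- Embedding of an index `i ∈ {1,2,3}` as the index of `∂_{i+3}` in `ℝ⁶`. -/
def hi (i : Fin 3) : Fin 6 := ⟨(i : ℕ) + 3, by have := i.isLt; omega⟩

/-- Lie derivative along `X` of a trivector `T` with constant components: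
`(L_X T)^{abc} = −∑_ℓ ((∂X_a/∂x_ℓ)T^{ℓbc} + (∂X_b/∂x_ℓ)T^{aℓc} + (∂X_c/∂x_ℓ)T^{abℓ})`. -/
def triLie (X : (Fin 6 → ℝ) → Fin 6 → ℝ) (T : Fin 6 → Fin 6 → Fin 6 → ℝ)
    (x : Fin 6 → ℝ) (a b c : Fin 6) : ℝ :=
  -∑ l, (pd l (fun y => X y a) x * T l b c + pd l (fun y => X y b) x * T a l c
        + pd l (fun y => X y c) x * T a b l)

/-- The constant trivector `T₂ = ∂₁∧∂₂∧∂₃ − a ∂₄∧∂₅∧∂₆`. -/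
def lagT₂ (a : ℝ) (i j k : Fin 6) : ℝ :=
  wedge3 (e6 0) (e6 1) (e6 2) i j k - a * wedge3 (e6 3) (e6 4) (e6 5) i j k

/-- The constant trivector `T₃ = ∑_{i,j,k} ε_{ijk} ∂_i ∧ ∂_{j+3} ∧ ∂_{k+3}`. -/
def lagT₃ (a b c : Fin 6) : ℝ :=
  ∑ i : Fin 3, ∑ j : Fin 3, ∑ k : Fin 3,
    eps i j k * wedge3 (e6 (lo i)) (e6 (hi j)) (e6 (hi k)) a b c

/-- The invariant Poisson bivector `P₂` of the Lagrange case. -/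
def lagP₂ (a : ℝ) (x : Fin 6 → ℝ) : Matrix (Fin 6) (Fin 6) ℝ :=
  !![0, 2 * x 2, -(2 * x 1), 0, 0, 0;
     -(2 * x 2), 0, 2 * x 0, 0, 0, 0;
     2 * x 1, -(2 * x 0), 0, 0, 0, 0;
     0, 0, 0, 0, -a, 0;
     0, 0, 0, a, 0, 0;
     0, 0, 0, 0, 0, 0]

/-- The canonical Lie–Poisson bivector `P₃ = P_c` on `e*(3)`. -/
def lagP₃ (x : Fin 6 → ℝ) : Matrix (Fin 6) (Fin 6) ℝ :=
  !![0, 0, 0, 0, x 2, -(x 1);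
     0, 0, 0, -(x 2), 0, x 0;
     0, 0, 0, x 1, -(x 0), 0;
     0, x 2, -(x 1), 0, x 5, -(x 4);
     -(x 2), 0, x 0, -(x 5), 0, x 3;
     x 1, -(x 0), 0, x 4, -(x 3), 0]

lemma cons_val_five (α : Type*) (a b c d e f : α) : ![a, b, c, d, e, f] 5 = f := rfl

lemma cons_val_five' {α : Type*} (a b c d e : α) (s : Fin 1 → α) :
    Matrix.vecCons a (Matrix.vecCons b (Matrix.vecCons c (Matrix.vecCons d
      (Matrix.vecCons e s)))) 5 = s 0 := rfl

lemma hproj {n : ℕ} (i : Fin n) (x : Fin n → ℝ) :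
    HasFDerivAt (fun y : Fin n → ℝ => y i)
      (ContinuousLinearMap.proj (R := ℝ) (φ := fun _ : Fin n => ℝ) i) x :=
  (ContinuousLinearMap.proj (R := ℝ) (φ := fun _ : Fin n => ℝ) i).hasFDerivAt

lemma pd_F14 (k : Fin 6) (x : Fin 6 → ℝ) :
    pd k (fun y => lagF₁ y + lagF₄ y) x
      = ![2 * x 0, 2 * x 1, 2 * x 2, 0, 0, 1] k := by
  have h := ((((hproj 0 x).mul (hproj 0 x)).add ((hproj 1 x).mul (hproj 1 x))).add
    ((hproj 2 x).mul (hproj 2 x))).add (hproj 5 x)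
  show fderiv ℝ (fun y : Fin 6 → ℝ => (y 0 ^ 2 + y 1 ^ 2 + y 2 ^ 2) + y 5) x (Pi.single k 1) = _
  simp only [pow_two]
  erw [h.fderiv]
  fin_cases k <;> simp [Pi.single_apply, cons_val_five, cons_val_five', Matrix.cons_val_succ, -Matrix.vecCons_const] <;> ring_nf

lemma pd_F2 (k : Fin 6) (x : Fin 6 → ℝ) :
    pd k lagF₂ x = ![x 3, x 4, x 5, x 0, x 1, x 2] k := by
  have h := (((hproj 0 x).mul (hproj 3 x)).add ((hproj 1 x).mul (hproj 4 x))).add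
    ((hproj 2 x).mul (hproj 5 x))
  show fderiv ℝ (fun y : Fin 6 → ℝ => y 0 * y 3 + y 1 * y 4 + y 2 * y 5) x (Pi.single k 1) = _
  erw [h.fderiv]
  fin_cases k <;> simp [Pi.single_apply, cons_val_five, cons_val_five', Matrix.cons_val_succ, -Matrix.vecCons_const] <;> ring_nf

lemma pd_F3 (a : ℝ) (k : Fin 6) (x : Fin 6 → ℝ) :
    pd k (lagF₃ a) x = ![0, 0, a, 2 * x 3, 2 * x 4, 2 * x 5] k := by
  have h := ((((hproj 3 x).mul (hproj 3 x)).add ((hproj 4 x).mul (hproj 4 x))).add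
    ((hproj 5 x).mul (hproj 5 x))).add ((hasFDerivAt_const a x).mul (hproj 2 x))
  show fderiv ℝ (fun y : Fin 6 → ℝ => (y 3 ^ 2 + y 4 ^ 2 + y 5 ^ 2) + a * y 2) x
    (Pi.single k 1) = _
  simp only [pow_two]
  erw [h.fderiv]
  fin_cases k <;> simp [Pi.single_apply, cons_val_five, cons_val_five', Matrix.cons_val_succ, -Matrix.vecCons_const] <;> ring_nf

set_option maxHeartbeats 4000000 in
/-- The conditional numerical invariants `T₂` and `T₃` of the Lagrange case:
(a) `T₂ d(f₁+f₄) = P₂` and `T₂ d(f₁+f₄) df₂ = −X`;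
(b) `T₃ df₂ = 2P₃` and `T₃ df₂ df₃ = −2X`. -/
theorem lagrange_T2_T3 (a : ℝ) (x : Fin 6 → ℝ) :
    (∀ i j : Fin 6, ∑ k, lagT₂ a i j k * pd k (fun y => lagF₁ y + lagF₄ y) x
      = lagP₂ a x i j) ∧
    (∀ i : Fin 6, ∑ j, ∑ k, lagT₂ a i j k * pd j (fun y => lagF₁ y + lagF₄ y) x
        * pd k lagF₂ x = -(lagX a x i)) ∧
    (∀ i j : Fin 6, ∑ k, lagT₃ i j k * pd k lagF₂ x = 2 * lagP₃ x i j) ∧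
    (∀ i : Fin 6, ∑ j, ∑ k, lagT₃ i j k * pd j lagF₂ x * pd k (lagF₃ a) x
      = -2 * lagX a x i) := by
  refine ⟨?_, ?_, ?_, ?_⟩
  · intro i j
    fin_cases i <;> fin_cases j <;>
      (simp [Fin.sum_univ_six, pd_F14, lagT₂, wedge3, e6, lagP₂, cons_val_five, cons_val_five', Matrix.cons_val_succ, -Matrix.vecCons_const]
        <;> ring_nf <;> tauto)
  · intro i
    fin_cases i <;>
      (simp [Fin.sum_univ_six, pd_F14, pd_F2, lagT₂, wedge3, e6, lagX, cons_val_five, cons_val_five', Matrix.cons_val_succ, -Matrix.vecCons_const]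
        <;> ring_nf <;> tauto)
  · intro i j
    fin_cases i <;> fin_cases j <;>
      (simp [Fin.sum_univ_six, Fin.sum_univ_three, pd_F2, lagT₃, eps, wedge3, e6, lo, hi, lagP₃, cons_val_five, cons_val_five', Matrix.cons_val_succ, -Matrix.vecCons_const]
        <;> ring_nf <;> tauto)
  · intro i
    fin_cases i <;>
      (simp [Fin.sum_univ_six, Fin.sum_univ_three, pd_F2, pd_F3, lagT₃, eps, wedge3, e6, lo, hi,
          lagX, cons_val_five, cons_val_five', Matrix.cons_val_succ, -Matrix.vecCons_const]
        <;> ring_nf <;> tauto)
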